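/- With Φ_t as above, for 0 ≤ u ≤ t ≤ T the scalar ρηb·[1 0]·Φ_t·Φ_u^{−1}·[0 1]ᵀ equals (2ρηz(1 − e^{−(b/κ)(t−u)}))/((1+2z)e^{ω(T−u)} − 1), and hence the price variance E[(S_t − E[S_t])²] = ∫_0^t (ρηb[1 0]Φ_tΦ_u^{−1}[0 1]ᵀ + σ)² du equals ∫_0^t ((2ρηz(1 − e^{−(b/κ)(t−u)}))/((1+2z)e^{ω(T−u)} − 1) + σ)² du. -/

import Mathlib

open Real Matrix

theorem price_variance_closed_form (k kbar b β γbar η ρ σ T : ℝ) (hk : 0 < k)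
    (hkbar : 0 ≤ kbar) (hb : b ≠ 0) (hβ : 0 < β) (hγbar : 0 < γbar) (hT : 0 < T)
    (κ z ω : ℝ) (hκ : κ = 2 * k + kbar) (hz : z = (κ * β - b) / (2 * γbar))
    (hω : ω = (κ * β - b) / κ) (hκβ : κ * β > b) :
    let Φ : ℝ → Matrix (Fin 2) (Fin 2) ℝ := fun t =>
      !![1, 2 * z * (1 - exp (-(b / κ) * t)) / (b * ((1 + 2 * z) * exp (ω * T) - 1));
         0, ((1 + 2 * z) * exp (ω * (T - t)) - 1) / ((1 + 2 * z) * exp (ω * T) - 1) *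
              exp (-(b / κ) * t)]
    let Φinv : ℝ → Matrix (Fin 2) (Fin 2) ℝ := fun t =>
      !![1, -2 * z * (1 - exp (-(b / κ) * t)) * exp ((b / κ) * t) /
             (b * ((1 + 2 * z) * exp (ω * (T - t)) - 1));
         0, ((1 + 2 * z) * exp (ω * T) - 1) / ((1 + 2 * z) * exp (ω * (T - t)) - 1) *
              exp ((b / κ) * t)]
    (∀ t ∈ Set.Icc (0 : ℝ) T, ∀ u ∈ Set.Icc (0 : ℝ) t,
        ρ * η * b * ((Φ t * Φinv u) 0 1)
          = 2 * ρ * η * z * (1 - exp (-(b / κ) * (t - u))) /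
              ((1 + 2 * z) * exp (ω * (T - u)) - 1)) ∧
      ∀ t ∈ Set.Icc (0 : ℝ) T,
        (∫ u in (0 : ℝ)..t, (ρ * η * b * ((Φ t * Φinv u) 0 1) + σ) ^ 2)
          = ∫ u in (0 : ℝ)..t,
              (2 * ρ * η * z * (1 - exp (-(b / κ) * (t - u))) /
                  ((1 + 2 * z) * exp (ω * (T - u)) - 1) + σ) ^ 2 := by
  intro Φ Φinv
  have hκ0 : 0 < κ := by
    rw [hκ]; linarith
  have hz0 : 0 < z := by
    rw [hz]; exact div_pos (by linarith) (by linarith)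
  have hω0 : 0 < ω := by
    rw [hω]; exact div_pos (by linarith) hκ0
  have hD : ∀ s : ℝ, 0 ≤ s → 0 < (1 + 2 * z) * exp (ω * s) - 1 := by
    intro s hs
    have h1 : (1 : ℝ) ≤ exp (ω * s) := by
      have : (0:ℝ) ≤ ω * s := by positivity
      simpa using Real.exp_le_exp.mpr this
    nlinarith [hz0]
  have key : ∀ t ∈ Set.Icc (0 : ℝ) T, ∀ u ∈ Set.Icc (0 : ℝ) t,
      ρ * η * b * ((Φ t * Φinv u) 0 1)
        = 2 * ρ * η * z * (1 - exp (-(b / κ) * (t - u))) /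
            ((1 + 2 * z) * exp (ω * (T - u)) - 1) := by
    intro t ht u hu
    have huT : u ≤ T := le_trans hu.2 ht.2
    have hDT : (1 + 2 * z) * exp (ω * T) - 1 ≠ 0 := ne_of_gt (hD T hT.le)
    have hDu : (1 + 2 * z) * exp (ω * (T - u)) - 1 ≠ 0 :=
      ne_of_gt (hD (T - u) (by linarith))
    simp only [Φ, Φinv, Matrix.mul_apply, Fin.sum_univ_succ, Fin.sum_univ_zero,
      Matrix.cons_val', Matrix.cons_val_zero, Matrix.cons_val_one, Matrix.head_cons,
      Matrix.empty_val', Matrix.cons_val_fin_one, Matrix.head_fin_const,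
      Matrix.of_apply, Matrix.cons_val_succ]
    have e1 : exp (-(b / κ) * (t - u)) = exp ((b/κ) * u) / exp ((b/κ) * t) := by
      rw [← Real.exp_sub]; ring_nf
    have e2 : exp (-(b / κ) * t) = 1 / exp ((b/κ) * t) := by
      rw [eq_div_iff (Real.exp_ne_zero _), ← Real.exp_add]; norm_num
    have e3 : exp (-(b / κ) * u) = 1 / exp ((b/κ) * u) := by
      rw [eq_div_iff (Real.exp_ne_zero _), ← Real.exp_add]; norm_num
    rw [e1, e2, e3]
    have h4 := Real.exp_ne_zero ((b/κ) * t)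
    have h5 := Real.exp_ne_zero ((b/κ) * u)
    field_simp
    ring
  refine ⟨key, fun t ht => ?_⟩
  apply intervalIntegral.integral_congr
  intro u hu
  rw [Set.uIcc_of_le ht.1] at hu
  simp only
  rw [key t ht u hu]
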